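/- Hyperbolicity of the 1+1+1 escape equilibria (linearized content of Proposition 4.6): suppose s_e ∈ (−1,1) satisfies Ũ'(s_e) = 0 and Ũ''(s_e) > 0, and let P^± = (±√(2Ũ(s_e)), s_e, 0). Then the Jacobian matrix of the vector field of the regularized reduced zero-energy system at P^+ has three real nonzero eigenvalues: one of them is ξ₁ = −(b−a)(1−s_e²)^a √(2Ũ(s_e)), and exactly one of the three eigenvalues is positive (the other two are negative). At P^− the Jacobian likewise has three real nonzero eigenvalues, exactly one of which is negative. In particular both equilibria are hyperbolic, P^+ has a one-dimensional unstable and two-dimensional stable eigenspace, and P^− has a two-dimensional unstable and one-dimensional stable eigenspace. -/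

import Mathlib

open Real Polynomial

lemma aux_charpoly (α β γ δ ε : ℝ) (hβδ : 0 < β * δ) :
    ∃ ξ₂ ξ₃ : ℝ,
      (Matrix.of ![![α,0,0],![0,0,β],![γ,δ,ε]] : Matrix (Fin 3) (Fin 3) ℝ).charpoly
        = (X - C α) * (X - C ξ₂) * (X - C ξ₃) ∧ ξ₂ < 0 ∧ 0 < ξ₃ := by
  have hd : (0:ℝ) ≤ ε^2 + 4*(β*δ) := by nlinarith
  set r := Real.sqrt (ε^2 + 4*(β*δ)) with hrdef
  have hr2 : r^2 = ε^2 + 4*(β*δ) := Real.sq_sqrt hd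
  have h0 : 0 ≤ r := Real.sqrt_nonneg _
  have hrabs : |ε| < r := by nlinarith [sq_abs ε, abs_nonneg ε]
  have hprod : ((ε - r)/2) * ((ε + r)/2) = -(β*δ) := by linear_combination (-(1:ℝ)/4) * hr2
  refine ⟨(ε - r)/2, (ε + r)/2, ?_, by nlinarith [le_abs_self ε], by nlinarith [neg_abs_le ε]⟩
  have key : (X - C ((ε - r)/2)) * (X - C ((ε + r)/2)) = X^2 - C ε * X - C (β*δ) := by
    have h1 : C ((ε - r)/2) + C ((ε + r)/2) = C ε := by rw [← map_add]; congr 1; ring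
    have h2 : C ((ε - r)/2) * C ((ε + r)/2) = - C (β*δ) := by rw [← map_mul, hprod, map_neg]
    calc (X - C ((ε - r)/2)) * (X - C ((ε + r)/2))
        = X^2 - (C ((ε - r)/2) + C ((ε + r)/2))*X + C ((ε - r)/2) * C ((ε + r)/2) := by ring
      _ = X^2 - C ε * X - C (β*δ) := by rw [h1, h2]; ring
  rw [mul_assoc, key, Matrix.charpoly, Matrix.det_fin_three]
  simp [Matrix.charmatrix_apply, Matrix.diagonal, Polynomial.C_mul]
  ring

/-- Hyperbolicity of the 1+1+1 escape equilibria: at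
`P^+ = (√(2Ũ(s_e)), s_e, 0)` the Jacobian of the vector field has three real
nonzero eigenvalues, one being `ξ₁ = −(b−a)(1−s_e²)^a √(2Ũ(s_e))`, with exactly
one positive eigenvalue; at `P^−` exactly one eigenvalue is negative. -/
theorem escape_equilibria_hyperbolic
    (a b : ℝ) (ha : 4 < a) (hab : a < b - 1)
    (lam : ℝ) (hlam : lam ∈ Set.Ioo 0 (Real.pi / 4))
    (U V : ℝ → ℝ)
    (hUpos : ∀ s ∈ Set.Ioo (-1 : ℝ) 1, 0 < U s)
    (hVpos : ∀ s ∈ Set.Ioo (-1 : ℝ) 1, 0 < V s)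
    (hU2 : ContDiffOn ℝ 2 U (Set.Ioo (-1 : ℝ) 1))
    (hV2 : ContDiffOn ℝ 2 V (Set.Ioo (-1 : ℝ) 1))
    (F1 F2 F3 : ℝ → ℝ → ℝ → ℝ)
    (hF1 : ∀ y s w : ℝ, F1 y s w =
      -(b / 2 - 1) * w ^ 2 + (b - a) * (1 - s ^ 2) ^ a * (U s - y ^ 2 / 2))
    (hF2 : ∀ y s w : ℝ, F2 y s w = (1 / lam) * (1 - s ^ 2) ^ (a / 2) * w)
    (hF3 : ∀ y s w : ℝ, F3 y s w =
      (a / 2 - 1) * (1 - s ^ 2) ^ a * y * w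
      + (1 / (2 * lam)) * (1 - s ^ 2) ^ (a / 2 - 1)
          * ((1 - s ^ 2) * deriv V s / V s - 2 * a * s) * w ^ 2
      + (1 / lam) * (1 - s ^ 2) ^ (3 * a / 2)
          * (deriv U s - (deriv V s / V s) * (U s - y ^ 2 / 2)))
    (se : ℝ) (hse : se ∈ Set.Ioo (-1 : ℝ) 1)
    (hcrit : deriv U se = 0) (hconv : 0 < deriv (deriv U) se)
    (yp ym : ℝ) (hyp : yp = Real.sqrt (2 * U se)) (hym : ym = -Real.sqrt (2 * U se))
    (Jp Jm : Matrix (Fin 3) (Fin 3) ℝ)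
    (hJp : Jp = Matrix.of
      ![![deriv (fun y => F1 y se 0) yp, deriv (fun s => F1 yp s 0) se,
          deriv (fun w => F1 yp se w) 0],
        ![deriv (fun y => F2 y se 0) yp, deriv (fun s => F2 yp s 0) se,
          deriv (fun w => F2 yp se w) 0],
        ![deriv (fun y => F3 y se 0) yp, deriv (fun s => F3 yp s 0) se,
          deriv (fun w => F3 yp se w) 0]])
    (hJm : Jm = Matrix.of
      ![![deriv (fun y => F1 y se 0) ym, deriv (fun s => F1 ym s 0) se,
          deriv (fun w => F1 ym se w) 0],
        ![deriv (fun y => F2 y se 0) ym, deriv (fun s => F2 ym s 0) se,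
          deriv (fun w => F2 ym se w) 0],
        ![deriv (fun y => F3 y se 0) ym, deriv (fun s => F3 ym s 0) se,
          deriv (fun w => F3 ym se w) 0]]) :
    (∃ ξ₂ ξ₃ : ℝ,
      Jp.charpoly =
        (X - C (-(b - a) * (1 - se ^ 2) ^ a * Real.sqrt (2 * U se)))
          * (X - C ξ₂) * (X - C ξ₃) ∧
      -(b - a) * (1 - se ^ 2) ^ a * Real.sqrt (2 * U se) < 0 ∧
      ξ₂ < 0 ∧ 0 < ξ₃) ∧
    (∃ η₁ η₂ η₃ : ℝ,
      Jm.charpoly = (X - C η₁) * (X - C η₂) * (X - C η₃) ∧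
      0 < η₁ ∧ 0 < η₂ ∧ η₃ < 0) := by
  have hp : 0 < 1 - se^2 := by nlinarith [hse.1, hse.2]
  have hU0 : 0 < U se := hUpos se hse
  have hV0 : 0 < V se := hVpos se hse
  have hVne : V se ≠ 0 := hV0.ne'
  have hUd : DifferentiableAt ℝ U se :=
    (hU2.differentiableOn (by norm_num)).differentiableAt (Ioo_mem_nhds hse.1 hse.2)
  have hU' : HasDerivAt U 0 se := by
    have := hUd.hasDerivAt; rwa [hcrit] at this
  have hU'd : DifferentiableAt ℝ (deriv U) se := by
    have h : ContDiffOn ℝ 1 (deriv U) (Set.Ioo (-1:ℝ) 1) :=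
      hU2.deriv_of_isOpen isOpen_Ioo (by norm_num)
    exact (h.differentiableOn (by norm_num)).differentiableAt (Ioo_mem_nhds hse.1 hse.2)
  have hU'' : HasDerivAt (deriv U) (deriv (deriv U) se) se := hU'd.hasDerivAt
  have hVd : DifferentiableAt ℝ V se :=
    (hV2.differentiableOn (by norm_num)).differentiableAt (Ioo_mem_nhds hse.1 hse.2)
  have hV'd : DifferentiableAt ℝ (deriv V) se := by
    have h : ContDiffOn ℝ 1 (deriv V) (Set.Ioo (-1:ℝ) 1) :=
      hV2.deriv_of_isOpen isOpen_Ioo (by norm_num)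
    exact (h.differentiableOn (by norm_num)).differentiableAt (Ioo_mem_nhds hse.1 hse.2)
  have hrp : ∀ c : ℝ, HasDerivAt (fun s : ℝ => (1 - s^2)^c)
      (-(2*se) * c * (1-se^2)^(c-1)) se := by
    intro c
    have hq : HasDerivAt (fun s : ℝ => 1 - s^2) (-(2*se)) se := by
      simpa using (HasDerivAt.const_sub 1 (hasDerivAt_pow 2 se))
    exact hq.rpow_const (Or.inl hp.ne')
  -- Entry computations
  have E11 : ∀ y0 : ℝ, deriv (fun y => F1 y se 0) y0 = -((b-a)*(1-se^2)^a*y0) := by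
    intro y0
    have h1 : HasDerivAt (fun y : ℝ => U se - y^2/2) (-y0) y0 := by
      have h := ((hasDerivAt_pow 2 y0).div_const 2).const_sub (U se)
      exact h.congr_deriv (by push_cast; ring)
    have h2 := (h1.const_mul ((b-a)*(1-se^2)^a)).const_add (-(b/2-1)*(0:ℝ)^2)
    have hfun : (fun y => F1 y se 0)
        = (fun y : ℝ => -(b/2-1)*(0:ℝ)^2 + (b-a)*(1-se^2)^a * (U se - y^2/2)) :=
      funext fun y => by rw [hF1]
    rw [hfun]
    rw [h2.deriv]; ring
  have E12 : ∀ y0 : ℝ, y0^2 = 2*U se → deriv (fun s => F1 y0 s 0) se = 0 := by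
    intro y0 hy
    have h1 : HasDerivAt (fun s : ℝ => (1-s^2)^a * (U s - y0^2/2))
        ((-(2*se) * a * (1-se^2)^(a-1)) * (U se - y0^2/2) + (1-se^2)^a * 0) se :=
      (hrp a).mul (hU'.sub_const (y0^2/2))
    have h2 := (h1.const_mul (b-a)).const_add (-(b/2-1)*(0:ℝ)^2)
    have hfun : (fun s => F1 y0 s 0)
        = (fun s : ℝ => -(b/2-1)*(0:ℝ)^2 + (b-a)*((1-s^2)^a * (U s - y0^2/2))) :=
      funext fun s => by rw [hF1]; ring
    rw [hfun, h2.deriv]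
    have hz : U se - y0^2/2 = 0 := by rw [hy]; ring
    rw [hz]; ring
  have E13 : ∀ y0 : ℝ, deriv (fun w => F1 y0 se w) 0 = 0 := by
    intro y0
    have h1 := ((hasDerivAt_pow 2 (0:ℝ)).const_mul (-(b/2-1))).add_const
      ((b-a)*(1-se^2)^a*(U se - y0^2/2))
    have hfun : (fun w => F1 y0 se w)
        = (fun w : ℝ => -(b/2-1)*w^2 + (b-a)*(1-se^2)^a*(U se - y0^2/2)) :=
      funext fun w => by rw [hF1]
    rw [hfun, h1.deriv]; norm_num
  have E21 : ∀ y0 : ℝ, deriv (fun y => F2 y se 0) y0 = 0 := by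
    intro y0
    have hfun : (fun y => F2 y se 0) = (fun _ : ℝ => (0:ℝ)) :=
      funext fun y => by rw [hF2]; ring
    rw [hfun]; exact deriv_const _ _
  have E22 : ∀ y0 : ℝ, deriv (fun s => F2 y0 s 0) se = 0 := by
    intro y0
    have hfun : (fun s => F2 y0 s 0) = (fun _ : ℝ => (0:ℝ)) :=
      funext fun s => by rw [hF2]; ring
    rw [hfun]; exact deriv_const _ _
  have E23 : ∀ y0 : ℝ, deriv (fun w => F2 y0 se w) 0 = (1/lam) * (1-se^2)^(a/2) := by
    intro y0
    have h1 : HasDerivAt (fun w : ℝ => (1/lam) * (1-se^2)^(a/2) * w)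
        ((1/lam) * (1-se^2)^(a/2)) 0 := by
      simpa using (hasDerivAt_id (0:ℝ)).const_mul ((1/lam) * (1-se^2)^(a/2))
    have hfun : (fun w => F2 y0 se w) = (fun w : ℝ => (1/lam) * (1-se^2)^(a/2) * w) :=
      funext fun w => by rw [hF2]
    rw [hfun, h1.deriv]
  have E32 : ∀ y0 : ℝ, y0^2 = 2*U se → deriv (fun s => F3 y0 s 0) se
      = (1/lam) * ((1-se^2)^(3*a/2) * deriv (deriv U) se) := by
    intro y0 hy
    have hz : U se - y0^2/2 = 0 := by rw [hy]; ring
    have hgd : HasDerivAt (fun s => deriv U s - (deriv V s / V s) * (U s - y0^2/2))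
        (deriv (deriv U) se -
          ((deriv (deriv V) se * V se - deriv V se * deriv V se) / V se ^ 2
            * (U se - y0^2/2) + (deriv V se / V se) * 0)) se :=
      hU''.sub ((hV'd.hasDerivAt.div hVd.hasDerivAt hVne).mul (hU'.sub_const (y0^2/2)))
    have hG : HasDerivAt
        (fun s => (1-s^2)^(3*a/2) * (deriv U s - (deriv V s / V s) * (U s - y0^2/2)))
        ((-(2*se) * (3*a/2) * (1-se^2)^(3*a/2-1))
            * (deriv U se - (deriv V se / V se) * (U se - y0^2/2))
          + (1-se^2)^(3*a/2) * (deriv (deriv U) se -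
            ((deriv (deriv V) se * V se - deriv V se * deriv V se) / V se ^ 2
              * (U se - y0^2/2) + (deriv V se / V se) * 0))) se :=
      (hrp (3*a/2)).mul hgd
    have hG2 := hG.const_mul (1/lam)
    have hfun : (fun s => F3 y0 s 0)
        = (fun s : ℝ => (1/lam) * ((1-s^2)^(3*a/2)
            * (deriv U s - (deriv V s / V s) * (U s - y0^2/2)))) :=
      funext fun s => by rw [hF3]; ring
    rw [hfun, hG2.deriv, hcrit, hz]
    ring
  have E33 : ∀ y0 : ℝ, deriv (fun w => F3 y0 se w) 0 = (a/2-1)*(1-se^2)^a*y0 := by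
    intro y0
    have h1 : HasDerivAt (fun w : ℝ => (a/2-1)*(1-se^2)^a*y0*w)
        ((a/2-1)*(1-se^2)^a*y0) 0 := by
      simpa using (hasDerivAt_id (0:ℝ)).const_mul ((a/2-1)*(1-se^2)^a*y0)
    have h2 : HasDerivAt (fun w : ℝ =>
        (1/(2*lam)) * (1-se^2)^(a/2-1) * ((1-se^2)*deriv V se/V se - 2*a*se) * w^2)
        0 0 := by
      have h := (hasDerivAt_pow 2 (0:ℝ)).const_mul
        ((1/(2*lam)) * (1-se^2)^(a/2-1) * ((1-se^2)*deriv V se/V se - 2*a*se))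
      exact h.congr_deriv (by push_cast; ring)
    have h3 := (h1.add h2).add_const
      ((1/lam)*(1-se^2)^(3*a/2)*(deriv U se - (deriv V se/V se)*(U se - y0^2/2)))
    have hfun : (fun w => F3 y0 se w)
        = (fun w : ℝ => (a/2-1)*(1-se^2)^a*y0*w
            + (1/(2*lam)) * (1-se^2)^(a/2-1) * ((1-se^2)*deriv V se/V se - 2*a*se) * w^2
            + (1/lam)*(1-se^2)^(3*a/2)*(deriv U se - (deriv V se/V se)*(U se - y0^2/2))) :=
      funext fun w => by rw [hF3]
    rw [hfun]; exact h3.deriv.trans (by ring)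
  -- positivity facts
  have hba : 0 < b - a := by linarith
  have hsq : 0 < Real.sqrt (2*U se) := Real.sqrt_pos.mpr (by linarith)
  have hβ : 0 < (1/lam) * (1-se^2)^(a/2) :=
    mul_pos (one_div_pos.mpr hlam.1) (Real.rpow_pos_of_pos hp _)
  have hδ : 0 < (1/lam) * ((1-se^2)^(3*a/2) * deriv (deriv U) se) :=
    mul_pos (one_div_pos.mpr hlam.1) (mul_pos (Real.rpow_pos_of_pos hp _) hconv)
  have hβδ := mul_pos hβ hδ
  have hα : -(b - a) * (1 - se ^ 2) ^ a * Real.sqrt (2 * U se) < 0 := by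
    have := mul_pos (mul_pos hba (Real.rpow_pos_of_pos hp a)) hsq
    nlinarith
  have hyps : yp^2 = 2*U se := by rw [hyp]; exact Real.sq_sqrt (by linarith)
  have hyms : ym^2 = 2*U se := by
    rw [hym, neg_sq]
    exact Real.sq_sqrt (by linarith)
  have hJp2 : Jp = Matrix.of
      ![![-(b - a) * (1 - se ^ 2) ^ a * Real.sqrt (2 * U se), 0, 0],
        ![0, 0, (1/lam) * (1-se^2)^(a/2)],
        ![deriv (fun y => F3 y se 0) yp, (1/lam) * ((1-se^2)^(3*a/2) * deriv (deriv U) se),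
          (a/2-1)*(1-se^2)^a*yp]] := by
    rw [hJp, E21 yp, E22 yp, E13 yp, E12 yp hyps, E23 yp, E32 yp hyps, E33 yp,
      show deriv (fun y => F1 y se 0) yp
        = -(b - a) * (1 - se ^ 2) ^ a * Real.sqrt (2 * U se) from by
          rw [E11 yp, hyp]; ring]
  have hJm2 : Jm = Matrix.of
      ![![(b - a) * (1 - se ^ 2) ^ a * Real.sqrt (2 * U se), 0, 0],
        ![0, 0, (1/lam) * (1-se^2)^(a/2)],
        ![deriv (fun y => F3 y se 0) ym, (1/lam) * ((1-se^2)^(3*a/2) * deriv (deriv U) se),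
          (a/2-1)*(1-se^2)^a*ym]] := by
    rw [hJm, E21 ym, E22 ym, E13 ym, E12 ym hyms, E23 ym, E32 ym hyms, E33 ym,
      show deriv (fun y => F1 y se 0) ym
        = (b - a) * (1 - se ^ 2) ^ a * Real.sqrt (2 * U se) from by
          rw [E11 ym, hym]; ring]
  constructor
  · obtain ⟨ξ₂, ξ₃, hch, h2, h3⟩ := aux_charpoly
      (-(b - a) * (1 - se ^ 2) ^ a * Real.sqrt (2 * U se))
      ((1/lam) * (1-se^2)^(a/2)) (deriv (fun y => F3 y se 0) yp)
      ((1/lam) * ((1-se^2)^(3*a/2) * deriv (deriv U) se))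
      ((a/2-1)*(1-se^2)^a*yp) hβδ
    exact ⟨ξ₂, ξ₃, by rw [hJp2]; exact hch, hα, h2, h3⟩
  · obtain ⟨ζ₂, ζ₃, hch, h2, h3⟩ := aux_charpoly
      ((b - a) * (1 - se ^ 2) ^ a * Real.sqrt (2 * U se))
      ((1/lam) * (1-se^2)^(a/2)) (deriv (fun y => F3 y se 0) ym)
      ((1/lam) * ((1-se^2)^(3*a/2) * deriv (deriv U) se))
      ((a/2-1)*(1-se^2)^a*ym) hβδ
    refine ⟨(b - a) * (1 - se ^ 2) ^ a * Real.sqrt (2 * U se), ζ₃, ζ₂, ?_,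
      by positivity, h3, h2⟩
    rw [hJm2]
    rw [hch]; ring
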